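/- Let u, v be positive C² functions on an open subset of a Riemannian surface satisfying -Δ log(u/v) ≤ 4(u - v) at each point, and suppose u(x) = v(x) at some point x and u ≥ v near x. Then there is a constant A > 0 with -Δ log(u/v) ≤ A log(u/v) near x, and by the strong maximum principle log(u/v) vanishes identically on a neighbourhood of x. -/

import Mathlib

open Filter

set_option maxHeartbeats 1000000

noncomputable section SchoenYauAux

open Metric Set Real

local notation "E2" => EuclideanSpace ℝ (Fin 2)





/-- analyst's Laplacian -/
def lapA (f : E2 → ℝ) (p : E2) : ℝ :=
  iteratedFDeriv ℝ 2 f p ![EuclideanSpace.single 0 1, EuclideanSpace.single 0 1] +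
  iteratedFDeriv ℝ 2 f p ![EuclideanSpace.single 1 1, EuclideanSpace.single 1 1]

lemma slice_hasDerivAt {f : E2 → ℝ} {p e : E2} {t : ℝ}
    (hf : DifferentiableAt ℝ f (p + t • e)) :
    HasDerivAt (fun s : ℝ => f (p + s • e)) (fderiv ℝ f (p + t • e) e) t := by
  have hline : HasDerivAt (fun s : ℝ => p + s • e) e t := by
    simpa using ((hasDerivAt_id t).smul_const e).const_add p
  exact hf.hasFDerivAt.comp_hasDerivAt t hline

lemma slice_deriv2 {f : E2 → ℝ} {p : E2} (e : E2) (hf : ContDiffAt ℝ 2 f p) :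
    HasDerivAt (fun t : ℝ => fderiv ℝ f (p + t • e) e)
      (fderiv ℝ (fderiv ℝ f) p e e) 0 := by
  have hΦ : ContDiffAt ℝ 1 (fderiv ℝ f) p := hf.fderiv_right (by norm_num)
  have hΦd : DifferentiableAt ℝ (fderiv ℝ f) p := hΦ.differentiableAt (by norm_num)
  have hline : HasDerivAt (fun s : ℝ => p + s • e) e 0 := by
    simpa using ((hasDerivAt_id (0:ℝ)).smul_const e).const_add p
  have h0 : HasFDerivAt (fderiv ℝ f) (fderiv ℝ (fderiv ℝ f) p)
      ((fun s : ℝ => p + s • e) 0) := by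
    simpa using hΦd.hasFDerivAt
  have h1 : HasDerivAt (fun t : ℝ => fderiv ℝ f (p + t • e))
      (fderiv ℝ (fderiv ℝ f) p e) 0 := h0.comp_hasDerivAt 0 hline
  have h2 := (ContinuousLinearMap.apply ℝ ℝ e).hasFDerivAt.comp_hasDerivAt 0 h1
  simpa [Function.comp_def] using h2

lemma iter2_eq_of_hasDerivAt {Ω : Set E2} (hΩ : IsOpen Ω) {f : E2 → ℝ}
    (hf : ContDiffOn ℝ 2 f Ω) {p : E2} (hp : p ∈ Ω) (e : E2) {g1 : ℝ → ℝ} {c : ℝ}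
    (hg1 : ∀ᶠ t in nhds (0:ℝ), HasDerivAt (fun s : ℝ => f (p + s • e)) (g1 t) t)
    (hg2 : HasDerivAt g1 c 0) :
    iteratedFDeriv ℝ 2 f p ![e, e] = c := by
  have hfp : ContDiffAt ℝ 2 f p := hf.contDiffAt (hΩ.mem_nhds hp)
  have hmem : ∀ᶠ t in nhds (0:ℝ), p + t • e ∈ Ω := by
    have hc : Continuous (fun s : ℝ => p + s • e) := by continuity
    exact hc.continuousAt.preimage_mem_nhds (by simpa using hΩ.mem_nhds hp)
  have hev : g1 =ᶠ[nhds (0:ℝ)] fun t => fderiv ℝ f (p + t • e) e := by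
    filter_upwards [hg1, hmem] with t h1 h2
    exact h1.unique (slice_hasDerivAt ((hf.contDiffAt (hΩ.mem_nhds h2)).differentiableAt
      (by norm_num)))
  have h3 : HasDerivAt (fun t : ℝ => fderiv ℝ f (p + t • e) e) c 0 :=
    hg2.congr_of_eventuallyEq hev.symm
  have h4 := h3.unique (slice_deriv2 e hfp)
  rw [iteratedFDeriv_two_apply]
  simpa using h4.symm


lemma iter2_nonpos_of_localMax {Ω : Set E2} (hΩ : IsOpen Ω) {f : E2 → ℝ}
    (hf : ContDiffOn ℝ 2 f Ω) {p : E2} (hp : p ∈ Ω) (hmax : IsLocalMax f p) (e : E2) :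
    iteratedFDeriv ℝ 2 f p ![e, e] ≤ 0 := by
  have hfp : ContDiffAt ℝ 2 f p := hf.contDiffAt (hΩ.mem_nhds hp)
  set c := fderiv ℝ (fderiv ℝ f) p e e with hc
  have hiter : iteratedFDeriv ℝ 2 f p ![e, e] = c := by
    rw [iteratedFDeriv_two_apply]; simp [hc]
  rw [hiter]
  by_contra hpos
  push_neg at hpos
  set g : ℝ → ℝ := fun t => f (p + t • e) with hgdef
  set g1 : ℝ → ℝ := fun t => fderiv ℝ f (p + t • e) e with hg1def
  -- eventual facts near 0
  have hmem : ∀ᶠ t in nhds (0:ℝ), p + t • e ∈ Ω := by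
    have hcont : Continuous (fun s : ℝ => p + s • e) := by continuity
    exact hcont.continuousAt.preimage_mem_nhds (by simpa using hΩ.mem_nhds hp)
  have hd1 : ∀ᶠ t in nhds (0:ℝ), HasDerivAt g (g1 t) t := by
    filter_upwards [hmem] with t ht
    exact slice_hasDerivAt ((hf.contDiffAt (hΩ.mem_nhds ht)).differentiableAt (by norm_num))
  have hgmax : IsLocalMax g 0 := by
    have hcont2 : Continuous (fun t : ℝ => p + t • e) := by continuity
    have h : IsLocalMax f ((fun t : ℝ => p + t • e) 0) := by simpa using hmax
    exact IsLocalMax.comp_continuous (g := fun t : ℝ => p + t • e) (b := 0) h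
      hcont2.continuousAt
  have hg10 : g1 0 = 0 := by
    have h0 := hd1.self_of_nhds
    exact hgmax.hasDerivAt_eq_zero h0
  have hd2 : HasDerivAt g1 c 0 := slice_deriv2 e hfp
  -- slope of g1 tends to c > 0, so g1 t > 0 for small t > 0
  have hslope : Tendsto (slope g1 0) (nhdsWithin 0 (Ioi 0)) (nhds c) :=
    (hasDerivAt_iff_tendsto_slope.1 hd2).mono_left
      (nhdsWithin_mono 0 (fun t ht => Set.mem_compl_singleton_iff.2 (ne_of_gt ht)))
  have hev1 : ∀ᶠ t in nhdsWithin (0:ℝ) (Ioi 0), 0 < slope g1 0 t :=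
    hslope.eventually (eventually_gt_nhds hpos)
  have hev2 : ∀ᶠ t in nhdsWithin (0:ℝ) (Ioi 0), 0 < g1 t := by
    filter_upwards [hev1, self_mem_nhdsWithin] with t h1 h2
    have h2' : (0:ℝ) < t := h2
    have hs : slope g1 0 t = g1 t / t := by simp [slope, hg10, div_eq_inv_mul]
    rw [hs] at h1
    exact (div_pos_iff.1 h1).resolve_right (fun h => absurd h2' (not_lt.2 h.2.le)) |>.1
  -- get a concrete interval
  rcases (nhdsGT_basis (0:ℝ)).eventually_iff.1 hev2 with ⟨r1, hr1, hint⟩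
  rcases Metric.eventually_nhds_iff.1 hd1 with ⟨r2, hr2, hd1'⟩
  rcases Metric.eventually_nhds_iff.1 hgmax with ⟨r3, hr3, hmax'⟩
  set r := min r1 (min r2 r3) / 2 with hrdef
  have hrpos : 0 < r := by positivity
  have hr_lt1 : r < r1 := by
    have : min r1 (min r2 r3) ≤ r1 := min_le_left _ _
    simp only [hrdef]; linarith
  have hr_lt2 : r < r2 := by
    have h1 : min r1 (min r2 r3) ≤ r2 := le_trans (min_le_right _ _) (min_le_left _ _)
    simp only [hrdef]; linarith
  have hr_lt3 : r < r3 := by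
    have h1 : min r1 (min r2 r3) ≤ r3 := le_trans (min_le_right _ _) (min_le_right _ _)
    simp only [hrdef]; linarith
  -- g strictly increasing on [0, r]
  have hmono : StrictMonoOn g (Icc 0 r) := by
    apply strictMonoOn_of_deriv_pos (convex_Icc 0 r)
    · intro t ht
      rcases ht with ⟨ht0, htr⟩
      have : dist t (0:ℝ) < r2 := by
        rw [Real.dist_eq, sub_zero, abs_of_nonneg ht0]; linarith
      exact (hd1' this).differentiableAt.continuousAt.continuousWithinAt
    · intro t ht
      rw [interior_Icc] at ht
      have hdist : dist t (0:ℝ) < r2 := by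
        rw [Real.dist_eq, sub_zero, abs_of_nonneg ht.1.le]; linarith [ht.2]
      rw [(hd1' hdist).deriv]
      exact hint ⟨ht.1, by linarith [ht.2]⟩
  have hlt : g 0 < g r := hmono (left_mem_Icc.2 hrpos.le) (right_mem_Icc.2 hrpos.le) hrpos
  have hle : g r ≤ g 0 := hmax' (by rw [Real.dist_eq, sub_zero, abs_of_nonneg hrpos.le]; linarith)
  linarith

lemma iter2_linear {f g : E2 → ℝ} {p : E2} (hf : ContDiffAt ℝ 2 f p)
    (hg : ContDiffAt ℝ 2 g p) (a b : ℝ) (e : E2) :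
    iteratedFDeriv ℝ 2 (fun y => a * f y + b * g y) p ![e, e] =
      a * iteratedFDeriv ℝ 2 f p ![e, e] + b * iteratedFDeriv ℝ 2 g p ![e, e] := by
  have hfd : ∀ᶠ y in nhds p, DifferentiableAt ℝ f y := by
    have := hf.eventually (n := 2) (by norm_num)
    filter_upwards [this] with y hy; exact hy.differentiableAt (by norm_num)
  have hgd : ∀ᶠ y in nhds p, DifferentiableAt ℝ g y := by
    have := hg.eventually (n := 2) (by norm_num)
    filter_upwards [this] with y hy; exact hy.differentiableAt (by norm_num)
  have hev : (fun y => fderiv ℝ (fun z => a * f z + b * g z) y) =ᶠ[nhds p]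
      (fun y => a • fderiv ℝ f y + b • fderiv ℝ g y) := by
    filter_upwards [hfd, hgd] with y hfy hgy
    rw [fderiv_fun_add ((hfy.const_mul a)) ((hgy.const_mul b)),
      fderiv_const_mul hfy a, fderiv_const_mul hgy b]
  have hΦf : DifferentiableAt ℝ (fderiv ℝ f) p :=
    (hf.fderiv_right (m := 1) (by norm_num)).differentiableAt (by norm_num)
  have hΦg : DifferentiableAt ℝ (fderiv ℝ g) p :=
    (hg.fderiv_right (m := 1) (by norm_num)).differentiableAt (by norm_num)
  have h2 : fderiv ℝ (fderiv ℝ (fun z => a * f z + b * g z)) p =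
      a • fderiv ℝ (fderiv ℝ f) p + b • fderiv ℝ (fderiv ℝ g) p := by
    rw [hev.fderiv_eq]
    rw [fderiv_fun_add (hΦf.fun_const_smul a) (hΦg.fun_const_smul b),
      fderiv_fun_const_smul hΦf a, fderiv_fun_const_smul hΦg b]
  rw [iteratedFDeriv_two_apply, iteratedFDeriv_two_apply, iteratedFDeriv_two_apply, h2]
  simp

-- barrier computations (needs h1 prelude)
lemma hasDerivAt_gauss (α c C a : ℝ) :
    HasDerivAt (fun a : ℝ => Real.exp (-α * (a ^ 2 + c)) - C)
      (-(2 * α * a) * Real.exp (-α * (a ^ 2 + c))) a := by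
  have h1 : HasDerivAt (fun a : ℝ => -α * (a ^ 2 + c)) (-(2 * α * a)) a := by
    have := ((hasDerivAt_pow 2 a).add_const c).const_mul (-α)
    exact this.congr_deriv (by norm_num; ring)
  have := h1.exp.sub_const C
  exact this.congr_deriv (by ring)

lemma hasDerivAt_gauss' (α c C a : ℝ) :
    HasDerivAt (fun a : ℝ => -(2 * α * a) * Real.exp (-α * (a ^ 2 + c)))
      ((4 * α ^ 2 * a ^ 2 - 2 * α) * Real.exp (-α * (a ^ 2 + c))) a := by
  have h1 : HasDerivAt (fun a : ℝ => -α * (a ^ 2 + c)) (-(2 * α * a)) a := by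
    have := ((hasDerivAt_pow 2 a).add_const c).const_mul (-α)
    exact this.congr_deriv (by norm_num; ring)
  have h2 : HasDerivAt (fun a : ℝ => -(2 * α * a)) (-(2 * α)) a := by
    have h := ((hasDerivAt_id a).const_mul (2 * α)).neg
    exact h.congr_deriv (by simp)
  have := h2.mul h1.exp
  exact this.congr_deriv (by ring)

lemma slice_coord (y e : E2) (t : ℝ) (i : Fin 2) : (y + t • e) i = y i + t * e i := rfl

def bar (α C : ℝ) (q : E2) (y : E2) : ℝ :=
  Real.exp (-α * ((y 0 - q 0) ^ 2 + (y 1 - q 1) ^ 2)) - C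

lemma bar_contDiffOn (α C : ℝ) (q : E2) : ContDiffOn ℝ 2 (bar α C q) Set.univ := by
  apply ContDiff.contDiffOn
  unfold bar
  apply ContDiff.sub _ contDiff_const
  apply Real.contDiff_exp.comp
  apply ContDiff.mul contDiff_const
  have h0 : ContDiff ℝ 2 (fun y : E2 => y 0) := by fun_prop
  have h1 : ContDiff ℝ 2 (fun y : E2 => y 1) := by fun_prop
  exact ((h0.sub contDiff_const).pow 2).add ((h1.sub contDiff_const).pow 2)

lemma lapA_bar (α C : ℝ) (q y : E2) :
    lapA (bar α C q) y =
      (4 * α ^ 2 * ((y 0 - q 0) ^ 2 + (y 1 - q 1) ^ 2) - 4 * α) *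
        Real.exp (-α * ((y 0 - q 0) ^ 2 + (y 1 - q 1) ^ 2)) := by
  have c00 : ∀ s : ℝ, (y + s • (EuclideanSpace.single 0 1 : E2)) 0 = y 0 + s := by
    intro s; rw [slice_coord, EuclideanSpace.single_apply]; norm_num
  have c01 : ∀ s : ℝ, (y + s • (EuclideanSpace.single 0 1 : E2)) 1 = y 1 := by
    intro s; rw [slice_coord, EuclideanSpace.single_apply]; norm_num
  have c10 : ∀ s : ℝ, (y + s • (EuclideanSpace.single 1 1 : E2)) 0 = y 0 := by
    intro s; rw [slice_coord, EuclideanSpace.single_apply]; norm_num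
  have c11 : ∀ s : ℝ, (y + s • (EuclideanSpace.single 1 1 : E2)) 1 = y 1 + s := by
    intro s; rw [slice_coord, EuclideanSpace.single_apply]; norm_num
  have hi0 : iteratedFDeriv ℝ 2 (bar α C q) y
      ![EuclideanSpace.single 0 1, EuclideanSpace.single 0 1] =
      (4 * α ^ 2 * (y 0 - q 0) ^ 2 - 2 * α) *
        Real.exp (-α * ((y 0 - q 0) ^ 2 + (y 1 - q 1) ^ 2)) := by
    have hs : (fun s : ℝ => bar α C q (y + s • EuclideanSpace.single 0 1)) =
        (fun s : ℝ => Real.exp (-α * ((y 0 - q 0 + s) ^ 2 + (y 1 - q 1) ^ 2)) - C) := by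
      funext s
      simp only [bar, c00, c01]
      ring_nf
    apply iter2_eq_of_hasDerivAt isOpen_univ (bar_contDiffOn α C q) (Set.mem_univ y)
      (EuclideanSpace.single 0 1)
      (g1 := fun t : ℝ => -(2 * α * (y 0 - q 0 + t)) *
        Real.exp (-α * ((y 0 - q 0 + t) ^ 2 + (y 1 - q 1) ^ 2)))
    · apply Filter.Eventually.of_forall
      intro t
      rw [hs]
      have h := hasDerivAt_gauss α ((y 1 - q 1) ^ 2) C (y 0 - q 0 + t)
      have hshift : HasDerivAt (fun s : ℝ => y 0 - q 0 + s) 1 t := by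
        simpa using (hasDerivAt_id t).const_add (y 0 - q 0)
      simpa [Function.comp_def] using h.comp t hshift
    · have h := hasDerivAt_gauss' α ((y 1 - q 1) ^ 2) C (y 0 - q 0 + 0)
      have hshift : HasDerivAt (fun s : ℝ => y 0 - q 0 + s) 1 0 := by
        simpa using (hasDerivAt_id (0:ℝ)).const_add (y 0 - q 0)
      have h2 := h.comp (0:ℝ) hshift
      simpa [Function.comp_def] using h2
  have hi1 : iteratedFDeriv ℝ 2 (bar α C q) y
      ![EuclideanSpace.single 1 1, EuclideanSpace.single 1 1] =
      (4 * α ^ 2 * (y 1 - q 1) ^ 2 - 2 * α) *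
        Real.exp (-α * ((y 0 - q 0) ^ 2 + (y 1 - q 1) ^ 2)) := by
    have hs : (fun s : ℝ => bar α C q (y + s • EuclideanSpace.single 1 1)) =
        (fun s : ℝ => Real.exp (-α * ((y 1 - q 1 + s) ^ 2 + (y 0 - q 0) ^ 2)) - C) := by
      funext s
      simp only [bar, c10, c11]
      ring_nf
    have key : iteratedFDeriv ℝ 2 (bar α C q) y
        ![EuclideanSpace.single 1 1, EuclideanSpace.single 1 1] =
        (4 * α ^ 2 * (y 1 - q 1) ^ 2 - 2 * α) *
          Real.exp (-α * ((y 1 - q 1) ^ 2 + (y 0 - q 0) ^ 2)) := by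
      apply iter2_eq_of_hasDerivAt isOpen_univ (bar_contDiffOn α C q) (Set.mem_univ y)
        (EuclideanSpace.single 1 1)
        (g1 := fun t : ℝ => -(2 * α * (y 1 - q 1 + t)) *
          Real.exp (-α * ((y 1 - q 1 + t) ^ 2 + (y 0 - q 0) ^ 2)))
      · apply Filter.Eventually.of_forall
        intro t
        rw [hs]
        have h := hasDerivAt_gauss α ((y 0 - q 0) ^ 2) C (y 1 - q 1 + t)
        have hshift : HasDerivAt (fun s : ℝ => y 1 - q 1 + s) 1 t := by
          simpa using (hasDerivAt_id t).const_add (y 1 - q 1)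
        simpa [Function.comp_def] using h.comp t hshift
      · have h := hasDerivAt_gauss' α ((y 0 - q 0) ^ 2) C (y 1 - q 1 + 0)
        have hshift : HasDerivAt (fun s : ℝ => y 1 - q 1 + s) 1 0 := by
          simpa using (hasDerivAt_id (0:ℝ)).const_add (y 1 - q 1)
        simpa [Function.comp_def] using h.comp (0:ℝ) hshift
    rw [key]
    ring_nf
  rw [lapA, hi0, hi1]
  ring

-- exponential barrier in direction 0
def expbar (β c : ℝ) (y : E2) : ℝ := Real.exp (β * (y 0 - c))

lemma expbar_contDiffOn (β c : ℝ) : ContDiffOn ℝ 2 (expbar β c) Set.univ := by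
  apply ContDiff.contDiffOn
  unfold expbar
  apply Real.contDiff_exp.comp
  fun_prop

lemma lapA_expbar (β c : ℝ) (y : E2) :
    lapA (expbar β c) y = β ^ 2 * Real.exp (β * (y 0 - c)) := by
  have c00 : ∀ s : ℝ, (y + s • (EuclideanSpace.single 0 1 : E2)) 0 = y 0 + s := by
    intro s; rw [slice_coord, EuclideanSpace.single_apply]; norm_num
  have c10 : ∀ s : ℝ, (y + s • (EuclideanSpace.single 1 1 : E2)) 0 = y 0 := by
    intro s; rw [slice_coord, EuclideanSpace.single_apply]; norm_num
  have hexp : ∀ a : ℝ, HasDerivAt (fun a : ℝ => Real.exp (β * (a - c)))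
      (β * Real.exp (β * (a - c))) a := by
    intro a
    have h1 : HasDerivAt (fun a : ℝ => β * (a - c)) β a := by
      simpa using ((hasDerivAt_id a).sub_const c).const_mul β
    simpa [mul_comm] using h1.exp
  have hi0 : iteratedFDeriv ℝ 2 (expbar β c) y
      ![EuclideanSpace.single 0 1, EuclideanSpace.single 0 1] =
      β ^ 2 * Real.exp (β * (y 0 - c)) := by
    have hs : (fun s : ℝ => expbar β c (y + s • EuclideanSpace.single 0 1)) =
        (fun s : ℝ => Real.exp (β * (y 0 + s - c))) := by
      funext s; simp only [expbar, c00]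
    apply iter2_eq_of_hasDerivAt isOpen_univ (expbar_contDiffOn β c) (Set.mem_univ y)
      (EuclideanSpace.single 0 1)
      (g1 := fun t : ℝ => β * Real.exp (β * (y 0 + t - c)))
    · apply Filter.Eventually.of_forall
      intro t
      rw [hs]
      have h := hexp (y 0 + t)
      have hshift : HasDerivAt (fun s : ℝ => y 0 + s) 1 t := by
        simpa using (hasDerivAt_id t).const_add (y 0)
      simpa [Function.comp_def] using h.comp t hshift
    · have hshift : HasDerivAt (fun s : ℝ => y 0 + s) 1 0 := by
        simpa using (hasDerivAt_id (0:ℝ)).const_add (y 0)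
      have h2 := ((hexp (y 0 + 0)).comp (0:ℝ) hshift).const_mul β
      exact h2.congr_deriv (by simp only [add_zero, mul_one]; ring)
  have hi1 : iteratedFDeriv ℝ 2 (expbar β c) y
      ![EuclideanSpace.single 1 1, EuclideanSpace.single 1 1] = 0 := by
    have hs : (fun s : ℝ => expbar β c (y + s • EuclideanSpace.single 1 1)) =
        (fun _ : ℝ => Real.exp (β * (y 0 - c))) := by
      funext s; simp only [expbar, c10]
    apply iter2_eq_of_hasDerivAt isOpen_univ (expbar_contDiffOn β c) (Set.mem_univ y)
      (EuclideanSpace.single 1 1) (g1 := fun _ : ℝ => (0:ℝ))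
    · apply Filter.Eventually.of_forall
      intro t
      rw [hs]
      exact hasDerivAt_const t _
    · exact hasDerivAt_const 0 _
  rw [lapA, hi0, hi1]
  ring
-- Euclidean coordinate facts
lemma coord_abs_le_dist (y q : E2) (i : Fin 2) : |y i - q i| ≤ dist y q := by
  rw [EuclideanSpace.dist_eq]
  have : |y i - q i| = Real.sqrt ((y i - q i) ^ 2) := (Real.sqrt_sq_eq_abs _).symm
  rw [this]
  apply Real.sqrt_le_sqrt
  rw [Fin.sum_univ_two]
  have h0 : dist (y 0) (q 0) ^ 2 = (y 0 - q 0) ^ 2 := by rw [Real.dist_eq, sq_abs]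
  have h1 : dist (y 1) (q 1) ^ 2 = (y 1 - q 1) ^ 2 := by rw [Real.dist_eq, sq_abs]
  rw [h0, h1]
  fin_cases i <;> simp <;> positivity

lemma dist_sq_eq (y q : E2) : (y 0 - q 0) ^ 2 + (y 1 - q 1) ^ 2 = dist y q ^ 2 := by
  rw [EuclideanSpace.dist_eq, Real.sq_sqrt]
  · rw [Fin.sum_univ_two, Real.dist_eq, Real.dist_eq, sq_abs, sq_abs]
  · positivity

/-- Weak minimum principle on a closed annulus. -/
lemma weak_min {Ω : Set E2} (hΩ : IsOpen Ω) {φ : E2 → ℝ} (hφ : ContDiffOn ℝ 2 φ Ω)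
    {q : E2} {d A : ℝ} (hd : 0 < d) (hA : 0 ≤ A)
    (hsub : closedBall q d ⊆ Ω)
    (hineq : ∀ y ∈ ball q d \ closedBall q (d/2), lapA φ y ≤ A * φ y)
    (hbd : ∀ y, dist y q = d/2 ∨ dist y q = d → 0 ≤ φ y) :
    ∀ y ∈ closedBall q d \ ball q (d/2), 0 ≤ φ y := by
  by_contra hcon
  push_neg at hcon
  obtain ⟨y₀, hy₀, hneg⟩ := hcon
  set β := Real.sqrt A + 1 with hβ
  have hβpos : 0 < β := by positivity
  have hβA : A < β ^ 2 := by
    have h1 : Real.sqrt A ^ 2 = A := Real.sq_sqrt hA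
    nlinarith [Real.sqrt_nonneg A]
  set G := expbar β (q 0) with hGdef
  have hGpos : ∀ y, 0 < G y := fun y => Real.exp_pos _
  set Gmax := Real.exp (β * d) with hGmaxdef
  have hGmaxpos : 0 < Gmax := Real.exp_pos _
  have hGle : ∀ y ∈ closedBall q d, G y ≤ Gmax := by
    intro y hy
    have h1 : |y 0 - q 0| ≤ dist y q := coord_abs_le_dist y q 0
    have h2 : dist y q ≤ d := mem_closedBall.1 hy
    have h3 : y 0 - q 0 ≤ d := le_trans (le_abs_self _) (h1.trans h2)
    exact Real.exp_le_exp.2 (by nlinarith)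
  set δ := (-φ y₀) / (2 * Gmax) with hδdef
  have hδpos : 0 < δ := by
    apply div_pos (by linarith) (by positivity)
  set ψ := fun y => (-1 : ℝ) * φ y + δ * G y with hψdef
  set Cl := closedBall q d \ ball q (d/2) with hCldef
  have hClcomp : IsCompact Cl := (isCompact_closedBall q d).diff isOpen_ball
  have hClsub : Cl ⊆ Ω := fun y hy => hsub hy.1
  have hGc2 : ContDiffOn ℝ 2 G Ω := (expbar_contDiffOn β (q 0)).mono (subset_univ Ω)
  have hψC2 : ContDiffOn ℝ 2 ψ Ω :=
    ((hφ.const_smul (-1:ℝ)).add (hGc2.const_smul δ)).congr (fun y _ => by simp [hψdef])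
  have hψc : ContinuousOn ψ Cl := (hψC2.continuousOn).mono hClsub
  obtain ⟨p₁, hp₁Cl, hp₁max⟩ := hClcomp.exists_isMaxOn ⟨y₀, hy₀⟩ hψc
  have hψy₀ : δ * Gmax < ψ y₀ := by
    have hδG : δ * Gmax = -φ y₀ / 2 := by
      rw [hδdef]; field_simp
    rw [hδG, hψdef]
    simp only
    nlinarith [hGpos y₀, hδpos]
  have hbd' : ∀ y ∈ Cl, (dist y q = d/2 ∨ dist y q = d) → ψ y ≤ δ * Gmax := by
    intro y hy hyb
    have h1 : 0 ≤ φ y := hbd y hyb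
    have h2 : G y ≤ Gmax := hGle y hy.1
    rw [hψdef]; simp only
    nlinarith
  have hp₁ψ : δ * Gmax < ψ p₁ := lt_of_lt_of_le hψy₀ (hp₁max hy₀)
  have hψp₁pos : 0 < ψ p₁ := lt_trans (by positivity) hp₁ψ
  have hp₁int : p₁ ∈ ball q d \ closedBall q (d/2) := by
    have hne : ¬(dist p₁ q = d/2 ∨ dist p₁ q = d) := by
      intro h
      exact absurd (hbd' p₁ hp₁Cl h) (not_le.2 hp₁ψ)
    push_neg at hne
    rcases hp₁Cl with ⟨hc1, hc2⟩
    refine ⟨mem_ball.2 (lt_of_le_of_ne (mem_closedBall.1 hc1) hne.2), ?_⟩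
    intro hc
    have hge : ¬ dist p₁ q < d/2 := fun h => hc2 (mem_ball.2 h)
    exact hne.1 (le_antisymm (mem_closedBall.1 hc) (not_lt.1 hge))
  have hopen : IsOpen (ball q d \ closedBall q (d/2)) := isOpen_ball.sdiff isClosed_closedBall
  have hsub2 : ball q d \ closedBall q (d/2) ⊆ Cl := fun y hy =>
    ⟨ball_subset_closedBall hy.1, fun hb => hy.2 (ball_subset_closedBall hb)⟩
  have hloc : IsLocalMax ψ p₁ :=
    hp₁max.isLocalMax (mem_nhds_iff.2 ⟨_, hsub2, hopen, hp₁int⟩)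
  have hp₁Ω : p₁ ∈ Ω := hClsub hp₁Cl
  have hlap_le : lapA ψ p₁ ≤ 0 := by
    have h0 := iter2_nonpos_of_localMax hΩ hψC2 hp₁Ω hloc (EuclideanSpace.single 0 1)
    have h1 := iter2_nonpos_of_localMax hΩ hψC2 hp₁Ω hloc (EuclideanSpace.single 1 1)
    rw [lapA]; linarith
  have hφat : ContDiffAt ℝ 2 φ p₁ := hφ.contDiffAt (hΩ.mem_nhds hp₁Ω)
  have hGat : ContDiffAt ℝ 2 G p₁ := hGc2.contDiffAt (hΩ.mem_nhds hp₁Ω)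
  have hlin : lapA ψ p₁ = (-1) * lapA φ p₁ + δ * lapA G p₁ := by
    rw [hψdef, lapA, lapA, lapA,
      iter2_linear hφat hGat (-1) δ (EuclideanSpace.single 0 1),
      iter2_linear hφat hGat (-1) δ (EuclideanSpace.single 1 1)]
    ring
  have hlapG : lapA G p₁ = β ^ 2 * G p₁ := lapA_expbar β (q 0) p₁
  have hlapφ : lapA φ p₁ ≤ A * φ p₁ := hineq p₁ hp₁int
  have hψval : ψ p₁ = (-1) * φ p₁ + δ * G p₁ := rfl
  have h1 : lapA ψ p₁ = -lapA φ p₁ + δ * (β ^ 2 * G p₁) := by rw [hlin, hlapG]; ring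
  have h4 : -(A * φ p₁) = A * ψ p₁ - A * (δ * G p₁) := by rw [hψval]; ring
  have h5 : 0 < A * ψ p₁ + δ * (β ^ 2 - A) * G p₁ := by
    have hp := mul_pos hδpos (mul_pos (by linarith : 0 < β ^ 2 - A) (hGpos p₁))
    nlinarith [mul_nonneg hA hψp₁pos.le]
  have h6 : δ * (β ^ 2 * G p₁) - A * (δ * G p₁) = δ * (β ^ 2 - A) * G p₁ := by ring
  linarith
lemma hasDerivAt_gauss0 (α a : ℝ) : HasDerivAt (fun a : ℝ => Real.exp (-α * a ^ 2))
    (-(2 * α * a) * Real.exp (-α * a ^ 2)) a := by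
  have h := hasDerivAt_gauss α 0 0 a
  simpa using h

lemma mvt_lower {α d s : ℝ} (hα : 0 < α) (hs : 0 < s) (hsd : s ≤ d / 2) :
    α * d * Real.exp (-α * d ^ 2) * s ≤
      Real.exp (-α * (d - s) ^ 2) - Real.exp (-α * d ^ 2) := by
  have hd : 0 < d := by linarith
  have hab : d - s < d := by linarith
  have hcont : ContinuousOn (fun a : ℝ => Real.exp (-α * a ^ 2)) (Icc (d - s) d) :=
    (Real.continuous_exp.comp (by continuity)).continuousOn
  obtain ⟨ξ, hξ, hsl⟩ := exists_hasDerivAt_eq_slope (fun a : ℝ => Real.exp (-α * a ^ 2))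
    (fun a : ℝ => -(2 * α * a) * Real.exp (-α * a ^ 2)) hab hcont
    (fun y _ => hasDerivAt_gauss0 α y)
  have hden : d - (d - s) ≠ 0 := by
    intro h; rw [sub_sub_cancel] at h; exact ne_of_gt hs h
  rw [eq_div_iff hden, sub_sub_cancel] at hsl
  have h2 : Real.exp (-α * (d - s) ^ 2) - Real.exp (-α * d ^ 2)
      = 2 * α * ξ * Real.exp (-α * ξ ^ 2) * s := by linarith [hsl]
  have hξ1 : d / 2 ≤ ξ := by linarith [hξ.1]
  have hξ2 : ξ ≤ d := le_of_lt hξ.2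
  have hE : Real.exp (-α * d ^ 2) ≤ Real.exp (-α * ξ ^ 2) := by
    apply Real.exp_le_exp.2
    nlinarith [mul_nonneg hα.le (mul_nonneg (by linarith : (0:ℝ) ≤ d - ξ)
      (by linarith : (0:ℝ) ≤ d + ξ))]
  rw [h2]
  have hEpos2 := Real.exp_pos (-α * d ^ 2)
  have hcoef : α * d ≤ 2 * α * ξ := by nlinarith
  have hkey := mul_le_mul_of_nonneg_right
    (mul_le_mul hcoef hE hEpos2.le (by nlinarith : (0:ℝ) ≤ 2 * α * ξ)) hs.le
  linarith [hkey]

/-- Strong maximum principle via Hopf boundary point argument. -/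
lemma smp {Ω : Set E2} (hΩ : IsOpen Ω) {w : E2 → ℝ} (hw : ContDiffOn ℝ 2 w Ω)
    {x : E2} {R A : ℝ} (hR : 0 < R) (hA : 0 ≤ A)
    (hsub : closedBall x R ⊆ Ω) (hw0 : ∀ y ∈ closedBall x R, 0 ≤ w y)
    (hineq : ∀ y ∈ closedBall x R, lapA w y ≤ A * w y) (hx0 : w x = 0) :
    ∀ q ∈ ball x (R/8), w q = 0 := by
  intro q hq
  by_contra hwq
  have hqx : dist q x < R / 8 := mem_ball.1 hq
  have hqR : q ∈ closedBall x R := mem_closedBall.2 (by linarith)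
  have hwqpos : 0 < w q := lt_of_le_of_ne (hw0 q hqR) (Ne.symm hwq)
  set Z := closedBall x (R/2) ∩ w ⁻¹' {0} with hZdef
  have hsub2 : closedBall x (R/2) ⊆ closedBall x R :=
    closedBall_subset_closedBall (by linarith)
  have hZclosed : IsClosed Z :=
    (hw.continuousOn.mono (hsub2.trans hsub)).preimage_isClosed_of_isClosed
      isClosed_closedBall isClosed_singleton
  have hZcomp : IsCompact Z :=
    (isCompact_closedBall x (R/2)).of_isClosed_subset hZclosed inter_subset_left
  have hxZ : x ∈ Z := ⟨mem_closedBall_self (by linarith), by simp [hx0]⟩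
  have hZne : Z.Nonempty := ⟨x, hxZ⟩
  have hqZ : q ∉ Z := fun h => hwq h.2
  set d := Metric.infDist q Z with hddef
  have hdpos : 0 < d := by
    rw [hddef]
    exact (hZclosed.notMem_iff_infDist_pos hZne).1 hqZ
  have hdlt : d < R/8 := lt_of_le_of_lt (Metric.infDist_le_dist_of_mem hxZ) hqx
  obtain ⟨p, hpZ, hpd⟩ := hZcomp.exists_infDist_eq_dist hZne q
  have hdpq : dist p q = d := by rw [hddef, hpd, dist_comm]
  have hball_cb : ∀ y ∈ closedBall q d, y ∈ closedBall x (R/2) := by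
    intro y hy
    have h1 : dist y q ≤ d := mem_closedBall.1 hy
    exact mem_closedBall.2 (by
      calc dist y x ≤ dist y q + dist q x := dist_triangle _ _ _
      _ ≤ R/2 := by linarith)
  have hballpos : ∀ y ∈ ball q d, 0 < w y := by
    intro y hy
    have hycb : y ∈ closedBall x (R/2) := hball_cb y (ball_subset_closedBall hy)
    rcases (hw0 y (hsub2 hycb)).lt_or_eq with h | h
    · exact h
    · exfalso
      have hyZ : y ∈ Z := ⟨hycb, by simp [← h]⟩
      have h2 : d ≤ dist q y := by
        rw [hddef]; exact Metric.infDist_le_dist_of_mem hyZ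
      rw [dist_comm] at h2
      linarith [mem_ball.1 hy]
  have hcbR : closedBall q d ⊆ closedBall x R := fun y hy => hsub2 (hball_cb y hy)
  have hcbΩ' : closedBall q d ⊆ ball x R := by
    intro y hy
    have h1 : dist y q ≤ d := mem_closedBall.1 hy
    exact mem_ball.2 (by
      calc dist y x ≤ dist y q + dist q x := dist_triangle _ _ _
      _ < R := by linarith)
  set α := (A + 4) * (1/d^2 + 1) with hαdef
  have hα1 : 1 ≤ α := by
    rw [hαdef]
    have h1 : (0:ℝ) < 1/d^2 := by positivity
    nlinarith
  have hαpos : 0 < α := by linarith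
  have hαd : A + 4 ≤ α * d ^ 2 := by
    rw [hαdef]
    have h1 : (A + 4) * (1/d^2 + 1) * d ^ 2 = (A + 4) + (A+4) * d^2 := by
      field_simp
    nlinarith [sq_nonneg d, hdpos]
  have hkey : ∀ r : ℝ, d/2 ≤ r → A + 4 * α ≤ 4 * α ^ 2 * r ^ 2 := by
    intro r hr
    have h1 : α * (A + 4) ≤ α * (α * d ^ 2) := by nlinarith
    have h2 : d ^ 2 ≤ 4 * r ^ 2 := by nlinarith
    nlinarith
  set C := Real.exp (-α * d ^ 2) with hCdef
  have hCpos : 0 < C := Real.exp_pos _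
  have hsphne : (Metric.sphere q (d/2)).Nonempty :=
    NormedSpace.sphere_nonempty.2 (by linarith)
  have hsph_ball : Metric.sphere q (d/2) ⊆ ball q d := by
    intro y hy
    have : dist y q = d/2 := mem_sphere.1 hy
    exact mem_ball.2 (by linarith)
  obtain ⟨m, hm, hmmin⟩ := (isCompact_sphere q (d/2)).exists_isMinOn hsphne
    (hw.continuousOn.mono (fun y hy => hsub (hcbR (ball_subset_closedBall (hsph_ball hy)))))
  set ε := w m with hεdef
  have hεpos : 0 < ε := hballpos m (hsph_ball hm)
  set φ := fun y => 1 * w y + (-ε) * bar α C q y with hφdef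
  have hwball : ContDiffOn ℝ 2 w (ball x R) :=
    hw.mono (fun y hy => hsub (ball_subset_closedBall hy))
  have hφC2 : ContDiffOn ℝ 2 φ (ball x R) := by
    apply ContDiffOn.add
    · exact (hwball.const_smul (1:ℝ)).congr (fun y _ => by simp)
    · exact (((bar_contDiffOn α C q).mono (subset_univ _)).const_smul (-ε)).congr
        (fun y _ => by simp)
  have hIneq : ∀ y ∈ ball q d \ closedBall q (d/2), lapA φ y ≤ A * φ y := by
    intro y hy
    have hwat : ContDiffAt ℝ 2 w y := hw.contDiffAt (hΩ.mem_nhds (hsub (hcbR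
      (ball_subset_closedBall hy.1))))
    have hbat : ContDiffAt ℝ 2 (bar α C q) y :=
      ((bar_contDiffOn α C q).contDiffAt (isOpen_univ.mem_nhds (mem_univ y)))
    have hlin : lapA φ y = 1 * lapA w y + (-ε) * lapA (bar α C q) y := by
      rw [hφdef, lapA, lapA, lapA,
        iter2_linear hwat hbat 1 (-ε) (EuclideanSpace.single 0 1),
        iter2_linear hwat hbat 1 (-ε) (EuclideanSpace.single 1 1)]
      ring
    have hwineq : lapA w y ≤ A * w y := hineq y (hcbR (ball_subset_closedBall hy.1))
    have hrr : (y 0 - q 0) ^ 2 + (y 1 - q 1) ^ 2 = dist y q ^ 2 := dist_sq_eq y q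
    have hrlow : d/2 ≤ dist y q := by
      by_contra hcon
      exact hy.2 (mem_closedBall.2 (le_of_lt (not_le.1 hcon)))
    have hbarineq : A * bar α C q y ≤ lapA (bar α C q) y := by
      rw [lapA_bar, bar, hrr]
      have hE := Real.exp_pos (-α * dist y q ^ 2)
      have hk := hkey (dist y q) hrlow
      nlinarith [hE, hCpos, hA]
    have hfin : (-ε) * lapA (bar α C q) y ≤ (-ε) * (A * bar α C q y) :=
      mul_le_mul_of_nonpos_left hbarineq (by linarith)
    rw [hlin, hφdef]
    simp only
    linarith [hwineq, hfin]
  have hBd : ∀ y, dist y q = d/2 ∨ dist y q = d → 0 ≤ φ y := by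
    intro y hy
    rcases hy with hy | hy
    · have hys : y ∈ Metric.sphere q (d/2) := mem_sphere.2 hy
      have hwy : ε ≤ w y := hmmin hys
      have hbar1 : bar α C q y ≤ 1 := by
        rw [bar]
        have h1 : Real.exp (-α * ((y 0 - q 0) ^ 2 + (y 1 - q 1) ^ 2)) ≤ 1 :=
          Real.exp_le_one_iff.2 (by nlinarith [sq_nonneg (y 0 - q 0), sq_nonneg (y 1 - q 1)])
        linarith [hCpos]
      rw [hφdef]; simp only
      nlinarith [hεpos]
    · have hbar0 : bar α C q y = 0 := by
        rw [bar, hCdef]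
        have h1 : (y 0 - q 0) ^ 2 + (y 1 - q 1) ^ 2 = d ^ 2 := by
          rw [dist_sq_eq, hy]
        rw [h1]
        ring
      have hwy : 0 ≤ w y := hw0 y (hcbR (mem_closedBall.2 (le_of_eq hy)))
      rw [hφdef]; simp only [hbar0]
      linarith
  have hwmp := weak_min isOpen_ball hφC2 hdpos hA hcbΩ' hIneq hBd
  -- Hopf contradiction at p
  have hpx : dist p x ≤ R/2 := mem_closedBall.1 hpZ.1
  have hwp : w p = 0 := hpZ.2
  have hpΩ : p ∈ Ω := hsub (hsub2 hpZ.1)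
  have hminp : IsLocalMin w p := by
    apply IsMinOn.isLocalMin (s := closedBall x R)
    · intro y hy
      rw [Set.mem_setOf_eq, hwp]
      exact hw0 y hy
    · exact mem_of_superset (isOpen_ball.mem_nhds (mem_ball.2 (by linarith)))
        ball_subset_closedBall
  have hfder : fderiv ℝ w p = 0 := hminp.fderiv_eq_zero
  set ν := (d⁻¹ : ℝ) • (q - p) with hνdef
  have hwdiff : DifferentiableAt ℝ w p :=
    (hw.contDiffAt (hΩ.mem_nhds hpΩ)).differentiableAt (by norm_num)
  have hslice : HasDerivAt (fun s : ℝ => w (p + s • ν)) 0 0 := by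
    have h := slice_hasDerivAt (f := w) (p := p) (e := ν) (t := 0)
      (by simpa using hwdiff)
    simpa [hfder] using h
  have hnormqp : ‖q - p‖ = d := by rw [← dist_eq_norm, dist_comm, hdpq]
  have hdist_ys : ∀ s : ℝ, 0 < s → s ≤ d/2 → dist (p + s • ν) q = d - s := by
    intro s hs hsd
    have h1 : p + s • ν - q = (s/d - 1) • (q - p) := by
      rw [hνdef, smul_smul, div_eq_mul_inv]
      module
    rw [dist_eq_norm, h1, norm_smul, hnormqp, Real.norm_eq_abs, abs_of_nonpos (by
      have h2 : s/d ≤ 1/2 := by rw [div_le_div_iff₀ hdpos (by norm_num : (0:ℝ) < 2)]; linarith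
      linarith)]
    field_simp
    ring
  set c := α * d * Real.exp (-α * d ^ 2) with hcdef
  have hcpos : 0 < c := by positivity
  have hlow : ∀ s : ℝ, 0 < s → s ≤ d/2 → ε * c * s ≤ w (p + s • ν) := by
    intro s hs hsd
    have hdys := hdist_ys s hs hsd
    have hyann : p + s • ν ∈ closedBall q d \ ball q (d/2) := by
      constructor
      · exact mem_closedBall.2 (by rw [hdys]; linarith)
      · intro hcon
        have h2 := mem_ball.1 hcon
        rw [hdys] at h2
        linarith
    have h0 := hwmp _ hyann
    have hbarval : bar α C q (p + s • ν) = Real.exp (-α * (d - s)^2) - C := by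
      rw [bar]
      congr 2
      rw [dist_sq_eq, hdys]
    rw [hφdef] at h0
    simp only [hbarval] at h0
    have hm2 := mvt_lower hαpos hs hsd
    rw [← hCdef, ← hcdef] at hm2
    nlinarith [hεpos]
  have htend : Tendsto (slope (fun s : ℝ => w (p + s • ν)) 0)
      (nhdsWithin 0 (Ioi 0)) (nhds 0) :=
    (hasDerivAt_iff_tendsto_slope.1 hslice).mono_left
      (nhdsWithin_mono 0 (fun t ht => Set.mem_compl_singleton_iff.2 (ne_of_gt ht)))
  have hev1 : ∀ᶠ s in nhdsWithin (0:ℝ) (Ioi 0),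
      slope (fun s : ℝ => w (p + s • ν)) 0 s < ε * c :=
    htend.eventually (eventually_lt_nhds (by positivity))
  have hev2 : ∀ᶠ s in nhdsWithin (0:ℝ) (Ioi 0),
      ε * c ≤ slope (fun s : ℝ => w (p + s • ν)) 0 s := by
    filter_upwards [Ioo_mem_nhdsGT_of_mem
      (show (0:ℝ) ∈ Ico (0:ℝ) (d/2) from Set.left_mem_Ico.2 (by linarith))] with s hs
    have h1 := hlow s hs.1 (le_of_lt hs.2)
    have hsl : slope (fun s : ℝ => w (p + s • ν)) 0 s = w (p + s • ν) / s := by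
      rw [slope_def_field]
      rw [show p + (0:ℝ) • ν = p by simp, hwp]
      field_simp
      simp
    rw [hsl, le_div_iff₀ hs.1]
    nlinarith [h1]
  obtain ⟨s, h1, h2⟩ := (hev1.and hev2).exists
  linarith


/-- Schoen–Yau type strong maximum principle step.  Let `u, v` be positive `C²` functions
on an open subset of a surface (here a chart, an open subset of `ℝ²`, with `Δ` the
geometer's Laplacian `Δw = -(∂²w/∂x² + ∂²w/∂y²)`) satisfying `-Δ log(u/v) ≤ 4(u - v)`,
and suppose `u(x) = v(x)` at some point `x` with `u ≥ v` near `x`.  Then there is `A > 0`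
with `-Δ log(u/v) ≤ A log(u/v)` near `x`, and `log(u/v)` vanishes identically near `x`. -/
theorem schoen_yau_strong_maximum_principle
    (Ω : Set (EuclideanSpace ℝ (Fin 2))) (hΩ : IsOpen Ω)
    (u v : EuclideanSpace ℝ (Fin 2) → ℝ)
    (hu : ContDiffOn ℝ 2 u Ω) (hv : ContDiffOn ℝ 2 v Ω)
    (hupos : ∀ y ∈ Ω, 0 < u y) (hvpos : ∀ y ∈ Ω, 0 < v y)
    (lap : (EuclideanSpace ℝ (Fin 2) → ℝ) → EuclideanSpace ℝ (Fin 2) → ℝ)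
    (hlap : ∀ w p, lap w p =
      -((iteratedFDeriv ℝ 2 w p) ![EuclideanSpace.single 0 1, EuclideanSpace.single 0 1] +
        (iteratedFDeriv ℝ 2 w p) ![EuclideanSpace.single 1 1, EuclideanSpace.single 1 1]))
    (hineq : ∀ y ∈ Ω,
      -(lap (fun p => Real.log (u p / v p)) y) ≤ 4 * (u y - v y))
    (x : EuclideanSpace ℝ (Fin 2)) (hx : x ∈ Ω)
    (heq : u x = v x) (hge : ∀ᶠ y in nhds x, v y ≤ u y) :
    (∃ A > (0 : ℝ), ∀ᶠ y in nhds x,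
      -(lap (fun p => Real.log (u p / v p)) y) ≤ A * Real.log (u y / v y)) ∧
    (∀ᶠ y in nhds x, u y = v y) := by
  have hbridge : ∀ (f : EuclideanSpace ℝ (Fin 2) → ℝ) y, -(lap f y) = lapA f y := by
    intro f y
    rw [hlap, lapA]
    ring
  have hw : ContDiffOn ℝ 2 (fun y => Real.log (u y / v y)) Ω :=
    (hu.div hv (fun y hy => (hvpos y hy).ne')).log
      (fun y hy => (div_pos (hupos y hy) (hvpos y hy)).ne')
  set A := 4 * (v x + 1) * (Real.exp 1 - 1) with hAdef
  have hexp1 : (2:ℝ) < Real.exp 1 := by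
    have := Real.add_one_le_exp (1:ℝ)
    nlinarith [Real.exp_pos (1:ℝ), Real.add_one_lt_exp (by norm_num : (1:ℝ) ≠ 0)]
  have hA : 0 < A := by
    have := hvpos x hx
    rw [hAdef]
    nlinarith
  have hΩnb : Ω ∈ nhds x := hΩ.mem_nhds hx
  have hwcont : ContinuousAt (fun y => Real.log (u y / v y)) x :=
    hw.continuousOn.continuousAt hΩnb
  have hwx : Real.log (u x / v x) = 0 := by
    rw [heq, div_self (hvpos x hx).ne']
    exact Real.log_one
  have hwtend : Filter.Tendsto (fun y => Real.log (u y / v y)) (nhds x) (nhds 0) := by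
    rw [← hwx]; exact hwcont.tendsto
  have hev_w1 : ∀ᶠ y in nhds x, Real.log (u y / v y) < 1 :=
    hwtend.eventually (eventually_lt_nhds one_pos)
  have hvcont : ContinuousAt v x := hv.continuousOn.continuousAt hΩnb
  have hev_v : ∀ᶠ y in nhds x, v y < v x + 1 :=
    hvcont.tendsto.eventually (eventually_lt_nhds (lt_add_one _))
  have hmain : ∀ᶠ y in nhds x,
      -(lap (fun p => Real.log (u p / v p)) y) ≤ A * Real.log (u y / v y) := by
    filter_upwards [hΩnb, hge, hev_w1, hev_v] with y hyΩ hgey hw1 hv1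
    have hupos' := hupos y hyΩ
    have hvpos' := hvpos y hyΩ
    have hdivpos : 0 < u y / v y := div_pos hupos' hvpos'
    have hwnn : 0 ≤ Real.log (u y / v y) := Real.log_nonneg ((one_le_div hvpos').2 hgey)
    set t := Real.log (u y / v y) with htdef
    have hexp : Real.exp t = u y / v y := Real.exp_log hdivpos
    have huv_eq : u y - v y = v y * (Real.exp t - 1) := by
      rw [hexp]
      field_simp
    have hconv : Real.exp t ≤ 1 + (Real.exp 1 - 1) * t := by
      have h := convexOn_exp.2 (Set.mem_univ (0:ℝ)) (Set.mem_univ (1:ℝ))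
        (by linarith : (0:ℝ) ≤ 1 - t) hwnn (by ring)
      simp only [smul_eq_mul, mul_zero, mul_one, zero_add, Real.exp_zero] at h
      nlinarith [h]
    have h2 : 0 ≤ Real.exp t - 1 := by
      have := Real.add_one_le_exp t
      linarith
    have h1 : Real.exp t - 1 ≤ (Real.exp 1 - 1) * t := by linarith
    have h3 : v y ≤ v x + 1 := le_of_lt hv1
    have h4 : (0:ℝ) ≤ v x + 1 := by nlinarith [hvpos x hx]
    have hprod := mul_le_mul h3 h1 h2 h4
    have hfinal : 4 * (u y - v y) ≤ A * t := by
      rw [hAdef, huv_eq]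
      nlinarith [hprod]
    exact le_trans (hineq y hyΩ) hfinal
  refine ⟨⟨A, hA, hmain⟩, ?_⟩
  -- Part 2: strong maximum principle
  have hall : ∀ᶠ y in nhds x, y ∈ Ω ∧ v y ≤ u y ∧
      -(lap (fun p => Real.log (u p / v p)) y) ≤ A * Real.log (u y / v y) := by
    filter_upwards [hΩnb, hge, hmain] with y h1 h2 h3
    exact ⟨h1, h2, h3⟩
  rcases Metric.eventually_nhds_iff_ball.1 hall with ⟨r, hr, hball⟩
  set R := r / 2 with hRdef
  have hRpos : 0 < R := by rw [hRdef]; linarith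
  have hcb : closedBall x R ⊆ ball x r := closedBall_subset_ball (by rw [hRdef]; linarith)
  have hsubΩ : closedBall x R ⊆ Ω := fun y hy => (hball y (hcb hy)).1
  have hw0 : ∀ y ∈ closedBall x R, 0 ≤ Real.log (u y / v y) := by
    intro y hy
    have h := hball y (hcb hy)
    exact Real.log_nonneg ((one_le_div (hvpos y h.1)).2 h.2.1)
  have hineq2 : ∀ y ∈ closedBall x R, lapA (fun p => Real.log (u p / v p)) y ≤
      A * Real.log (u y / v y) := by
    intro y hy
    have h := hball y (hcb hy)
    rw [← hbridge]
    exact h.2.2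
  have hzero := smp hΩ hw hRpos hA.le hsubΩ hw0 hineq2 hwx
  have hballnb : ball x (R/8) ∈ nhds x := ball_mem_nhds x (by positivity)
  filter_upwards [hballnb, hΩnb] with y hy hyΩ
  have h0 : Real.log (u y / v y) = 0 := hzero y hy
  have hdivpos : 0 < u y / v y := div_pos (hupos y hyΩ) (hvpos y hyΩ)
  have h1 : u y / v y = 1 := by
    rcases Real.log_eq_zero.1 h0 with h | h | h
    · exact absurd h (ne_of_gt hdivpos)
    · exact h
    · exfalso; rw [h] at hdivpos; norm_num at hdivpos
  exact (div_eq_one_iff_eq (hvpos y hyΩ).ne').1 h1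

end SchoenYauAux
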